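/- Let t=(a,c,d) be a triangle and s'=(c,d,e,f) a square of the subcubic graph G that share exactly one edge, namely (c,d), and assume the weight function w is vertex-induced on s'. If M1 is a 2-matching of G that contains all three edges of t, then there exists a 2-matching M2 of G with w(M2) ≥ w(M1) such that M2 does not contain all three edges of t, and every short cycle of G all of whose (native) edges lie in M2 also has all of its (native) edges in M1. -/
import Mathlib


open Finset
open scoped Classical

namespace Paper

variable {V : Type*}

/-- `t` is the vertex set of a triangle (cycle of length 3) of `G`. -/
def IsTriangle (G : SimpleGraph V) (t : Finset V) : Prop :=
  t.card = 3 ∧ ∀ x ∈ t, ∀ y ∈ t, x ≠ y → G.Adj x y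

/-- The (three) edges of a triangle with vertex set `t`. -/
def triEdges [DecidableEq V] (t : Finset V) : Finset (Sym2 V) :=
  t.sym2.filter (fun e => ¬ e.IsDiag)

/-- Some connected component of `G` is isomorphic to the complete graph `K₄`:
there are four pairwise distinct, pairwise adjacent vertices that have no
neighbours outside of these four vertices. -/
def HasK4Component (G : SimpleGraph V) : Prop :=
  ∃ a b c d : V, a ≠ b ∧ a ≠ c ∧ a ≠ d ∧ b ≠ c ∧ b ≠ d ∧ c ≠ d ∧
    G.Adj a b ∧ G.Adj a c ∧ G.Adj a d ∧ G.Adj b c ∧ G.Adj b d ∧ G.Adj c d ∧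
    ∀ x y : V, (x = a ∨ x = b ∨ x = c ∨ x = d) → G.Adj x y →
      (y = a ∨ y = b ∨ y = c ∨ y = d)

/-- The degree of the vertex `v` in the edge set `M`, i.e. the number of edges
of `M` incident to `v`. -/
noncomputable def degIn (M : Finset (Sym2 V)) (v : V) : ℕ :=
  (M.filter (fun e => v ∈ e)).card

/-- `M` is a 2-matching of `G`: a set of edges of `G` such that every vertex is
incident to at most two of its edges. -/
def Is2Matching (G : SimpleGraph V) (M : Finset (Sym2 V)) : Prop :=
  (∀ e ∈ M, e ∈ G.edgeSet) ∧ ∀ v : V, degIn M v ≤ 2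

/-- No triangle of `G` has all three of its edges in `M`. -/
def TriangleFree [DecidableEq V] (G : SimpleGraph V) (M : Finset (Sym2 V)) : Prop :=
  ∀ t : Finset V, IsTriangle G t → ¬ triEdges t ⊆ M

/-- The triangle `t` is unproblematic: some other triangle `t'` shares an edge
with `t` and `w(t) ≤ w(t')`. -/
def TriUnprob [DecidableEq V] (G : SimpleGraph V) (w : Sym2 V → ℝ) (t : Finset V) : Prop :=
  ∃ t' : Finset V, IsTriangle G t' ∧ t' ≠ t ∧ (triEdges t ∩ triEdges t').Nonempty ∧
    ∑ e ∈ triEdges t, w e ≤ ∑ e ∈ triEdges t', w e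

/-- The triangle `t` is problematic. -/
def ProblemTri [DecidableEq V] (G : SimpleGraph V) (w : Sym2 V → ℝ) (t : Finset V) : Prop :=
  IsTriangle G t ∧ ¬ TriUnprob G w t

/-- `(a, b, c, d)` is a square (cycle of length 4) of `G`. -/
def IsSquare4 (G : SimpleGraph V) (a b c d : V) : Prop :=
  a ≠ b ∧ a ≠ c ∧ a ≠ d ∧ b ≠ c ∧ b ≠ d ∧ c ≠ d ∧
  G.Adj a b ∧ G.Adj b c ∧ G.Adj c d ∧ G.Adj d a

/-- The four native edges of the square `(a, b, c, d)`. -/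
def sqEdges [DecidableEq V] (a b c d : V) : Finset (Sym2 V) :=
  {s(a, b), s(b, c), s(c, d), s(d, a)}

/-- No square of `G` has all four of its native edges in `M`. -/
def SquareFree [DecidableEq V] (G : SimpleGraph V) (M : Finset (Sym2 V)) : Prop :=
  ∀ a b c d : V, IsSquare4 G a b c d → ¬ sqEdges a b c d ⊆ M

/-- The square `(a, b, c, d)` is unproblematic: there is another square `s'`
such that either they share exactly one edge, or they share two edges and
`w(s) ≤ w(s')`. -/
def SqUnprob [DecidableEq V] (G : SimpleGraph V) (w : Sym2 V → ℝ) (a b c d : V) : Prop :=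
  ∃ a' b' c' d' : V, IsSquare4 G a' b' c' d' ∧ sqEdges a' b' c' d' ≠ sqEdges a b c d ∧
    ((sqEdges a b c d ∩ sqEdges a' b' c' d').card = 1 ∨
     ((sqEdges a b c d ∩ sqEdges a' b' c' d').card = 2 ∧
       ∑ e ∈ sqEdges a b c d, w e ≤ ∑ e ∈ sqEdges a' b' c' d', w e))

/-- The square `(a, b, c, d)` is problematic. -/
def ProblemSq [DecidableEq V] (G : SimpleGraph V) (w : Sym2 V → ℝ) (a b c d : V) : Prop :=
  IsSquare4 G a b c d ∧ ¬ SqUnprob G w a b c d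

lemma degIn_eq {V : Type*} [DecidableEq V] (M : Finset (Sym2 V)) (v : V) :
    degIn M v = (M.filter (fun g => v ∈ g)).card := by
  unfold degIn
  congr 1
  exact Finset.filter_congr_decidable M (fun g => v ∈ g) _

lemma mem_triEdges [DecidableEq V] {t : Finset V} {p q : V} :
    s(p,q) ∈ triEdges t ↔ p ∈ t ∧ q ∈ t ∧ p ≠ q := by
  simp [triEdges, Finset.mk_mem_sym2_iff, and_assoc]

lemma tri_third [DecidableEq V] {t : Finset V} {p q : V}
    (hcard : t.card = 3) (hp : p ∈ t) (hq : q ∈ t) (hpq : p ≠ q) :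
    ∃ x ∈ t, x ≠ p ∧ x ≠ q := by
  have h1 : q ∈ t.erase p := Finset.mem_erase.mpr ⟨Ne.symm hpq, hq⟩
  have h2 : ((t.erase p).erase q).Nonempty := by
    rw [← Finset.card_pos, Finset.card_erase_of_mem h1, Finset.card_erase_of_mem hp, hcard]
    norm_num
  obtain ⟨x, hx⟩ := h2
  rw [Finset.mem_erase, Finset.mem_erase] at hx
  exact ⟨x, hx.2.2, hx.2.1, hx.1⟩

lemma sq_edge_path [DecidableEq V] {G : SimpleGraph V} {x y z u p q : V}
    (h : IsSquare4 G x y z u) (hpq : s(p,q) ∈ sqEdges x y z u) :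
    ∃ p' q', p' ≠ q ∧ q' ≠ p ∧ s(p,p') ∈ sqEdges x y z u ∧
      s(p',q') ∈ sqEdges x y z u ∧ s(q',q) ∈ sqEdges x y z u := by
  obtain ⟨hxy, hxz, hxu, hyz, hyu, hzu, -⟩ := h
  simp only [sqEdges, Finset.mem_insert, Finset.mem_singleton, Sym2.eq_iff] at hpq
  rcases hpq with (⟨rfl,rfl⟩|⟨rfl,rfl⟩)|(⟨rfl,rfl⟩|⟨rfl,rfl⟩)|(⟨rfl,rfl⟩|⟨rfl,rfl⟩)|(⟨rfl,rfl⟩|⟨rfl,rfl⟩)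
  · exact ⟨u, z, by aesop, by aesop, by simp [sqEdges, Sym2.eq_swap], by simp [sqEdges, Sym2.eq_swap], by simp [sqEdges, Sym2.eq_swap]⟩
  · exact ⟨z, u, by aesop, by aesop, by simp [sqEdges, Sym2.eq_swap], by simp [sqEdges, Sym2.eq_swap], by simp [sqEdges, Sym2.eq_swap]⟩
  · exact ⟨x, u, by aesop, by aesop, by simp [sqEdges, Sym2.eq_swap], by simp [sqEdges, Sym2.eq_swap], by simp [sqEdges, Sym2.eq_swap]⟩
  · exact ⟨u, x, by aesop, by aesop, by simp [sqEdges, Sym2.eq_swap], by simp [sqEdges, Sym2.eq_swap], by simp [sqEdges, Sym2.eq_swap]⟩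
  · exact ⟨y, x, by aesop, by aesop, by simp [sqEdges, Sym2.eq_swap], by simp [sqEdges, Sym2.eq_swap], by simp [sqEdges, Sym2.eq_swap]⟩
  · exact ⟨x, y, by aesop, by aesop, by simp [sqEdges, Sym2.eq_swap], by simp [sqEdges, Sym2.eq_swap], by simp [sqEdges, Sym2.eq_swap]⟩
  · exact ⟨z, y, by aesop, by aesop, by simp [sqEdges, Sym2.eq_swap], by simp [sqEdges, Sym2.eq_swap], by simp [sqEdges, Sym2.eq_swap]⟩
  · exact ⟨y, z, by aesop, by aesop, by simp [sqEdges, Sym2.eq_swap], by simp [sqEdges, Sym2.eq_swap], by simp [sqEdges, Sym2.eq_swap]⟩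


set_option maxHeartbeats 2000000 in
/-- Let `t = (a,c,d)` be a triangle and `s' = (c,d,e,f)` a
square of a subcubic graph `G` sharing exactly the edge `(c,d)`, and let `w`
be vertex-induced on `s'`. If `M₁` is a 2-matching of `G` containing all
three edges of `t`, then there is a 2-matching `M₂` with `w(M₂) ≥ w(M₁)` that
does not contain all three edges of `t`, and every short cycle (triangle or
square) of `G` all of whose (native) edges lie in `M₂` also has all of its
(native) edges in `M₁`. -/
theorem remove_triangle_sharing_one_edge_with_square {V : Type*} [Fintype V] [DecidableEq V]
    (G : SimpleGraph V) [DecidableRel G.Adj]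
    (hsub : ∀ v : V, G.degree v ≤ 3)
    (w : Sym2 V → ℝ) (hw : ∀ e, 0 ≤ w e)
    (a c d e f : V)
    (ht : IsTriangle G {a, c, d}) (hs' : IsSquare4 G c d e f)
    (hshare : triEdges {a, c, d} ∩ sqEdges c d e f = {s(c, d)})
    (hvi : ∃ r : V → ℝ, ∀ x y : V, (x = c ∨ x = d ∨ x = e ∨ x = f) →
      (y = c ∨ y = d ∨ y = e ∨ y = f) → G.Adj x y → w s(x, y) = r x + r y)
    (M₁ : Finset (Sym2 V)) (hM₁ : Is2Matching G M₁)
    (htM₁ : triEdges {a, c, d} ⊆ M₁) :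
    ∃ M₂ : Finset (Sym2 V), Is2Matching G M₂ ∧
      ∑ e' ∈ M₁, w e' ≤ ∑ e' ∈ M₂, w e' ∧
      ¬ triEdges {a, c, d} ⊆ M₂ ∧
      (∀ t : Finset V, IsTriangle G t → triEdges t ⊆ M₂ → triEdges t ⊆ M₁) ∧
      (∀ x y z u : V, IsSquare4 G x y z u → sqEdges x y z u ⊆ M₂ →
        sqEdges x y z u ⊆ M₁) := by
  classical
  obtain ⟨hcd, hce, hcf, hde, hdf, hef, hAcd, hAde, hAef, hAfc⟩ := hs'
  -- distinctness of the triangle vertices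
  have hac : a ≠ c := by
    rintro rfl
    have h3 := ht.1
    rw [show ({a, a, d} : Finset V) = {a, d} by simp] at h3
    have h4 := Finset.card_insert_le a ({d} : Finset V)
    simp at h4; omega
  have had : a ≠ d := by
    rintro rfl
    have h3 := ht.1
    rw [show ({a, c, a} : Finset V) = {a, c} by ext x; simp; tauto] at h3
    have h4 := Finset.card_insert_le a ({c} : Finset V)
    simp at h4; omega
  -- triangle edges
  have hmac : s(a,c) ∈ triEdges {a,c,d} := mem_triEdges.mpr ⟨by simp, by simp, hac⟩
  have hmad : s(a,d) ∈ triEdges {a,c,d} := mem_triEdges.mpr ⟨by simp, by simp, had⟩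
  have hmcd : s(c,d) ∈ triEdges {a,c,d} := mem_triEdges.mpr ⟨by simp, by simp, hcd⟩
  have h1ac : s(a,c) ∈ M₁ := htM₁ hmac
  have h1ad : s(a,d) ∈ M₁ := htM₁ hmad
  have h1cd : s(c,d) ∈ M₁ := htM₁ hmcd
  -- a is not a vertex of the square
  have hae : a ≠ e := by
    rintro rfl
    have h1 : s(a,d) ∈ triEdges {a,c,d} ∩ sqEdges c d a f :=
      Finset.mem_inter.mpr ⟨hmad, by simp [sqEdges, Sym2.eq_swap]⟩
    rw [hshare] at h1
    rcases Sym2.eq_iff.mp (Finset.mem_singleton.mp h1) with ⟨h1', h2'⟩ | ⟨h1', h2'⟩ <;> simp_all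
  have haf : a ≠ f := by
    rintro rfl
    have h1 : s(a,c) ∈ triEdges {a,c,d} ∩ sqEdges c d e a :=
      Finset.mem_inter.mpr ⟨hmac, by simp [sqEdges, Sym2.eq_swap]⟩
    rw [hshare] at h1
    rcases Sym2.eq_iff.mp (Finset.mem_singleton.mp h1) with ⟨h1', h2'⟩ | ⟨h1', h2'⟩ <;> simp_all
  -- distinctness of the relevant edges
  have hne1 : s(a,c) ≠ s(a,d) := by
    intro h; rcases Sym2.eq_iff.mp h with ⟨h1, h2⟩ | ⟨h1, h2⟩ <;> simp_all
  have hne2 : s(a,c) ≠ s(c,d) := by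
    intro h; rcases Sym2.eq_iff.mp h with ⟨h1, h2⟩ | ⟨h1, h2⟩ <;> simp_all
  have hne3 : s(a,d) ≠ s(c,d) := by
    intro h; rcases Sym2.eq_iff.mp h with ⟨h1, h2⟩ | ⟨h1, h2⟩ <;> simp_all
  have hne4 : s(c,d) ≠ s(e,f) := by
    intro h; rcases Sym2.eq_iff.mp h with ⟨h1, h2⟩ | ⟨h1, h2⟩ <;> simp_all
  have hne5 : s(d,e) ≠ s(c,f) := by
    intro h; rcases Sym2.eq_iff.mp h with ⟨h1, h2⟩ | ⟨h1, h2⟩ <;> simp_all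
  have hne6 : s(d,e) ≠ s(e,f) := by
    intro h; rcases Sym2.eq_iff.mp h with ⟨h1, h2⟩ | ⟨h1, h2⟩ <;> simp_all
  have hne7 : s(c,f) ≠ s(e,f) := by
    intro h; rcases Sym2.eq_iff.mp h with ⟨h1, h2⟩ | ⟨h1, h2⟩ <;> simp_all
  -- saturation in M₁
  have sat : ∀ (v : V) (g₁ g₂ : Sym2 V), g₁ ≠ g₂ → g₁ ∈ M₁ → g₂ ∈ M₁ → v ∈ g₁ → v ∈ g₂ →
      ∀ g ∈ M₁, v ∈ g → g = g₁ ∨ g = g₂ := by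
    intro v g₁ g₂ hne h1 h2 hv1 hv2 g hg hvg
    have hsubset : ({g₁, g₂} : Finset (Sym2 V)) ⊆ M₁.filter (fun e' => v ∈ e') := by
      intro g' hg'
      rcases Finset.mem_insert.mp hg' with rfl | hg'
      · exact Finset.mem_filter.mpr ⟨h1, hv1⟩
      · rw [Finset.mem_singleton] at hg'; subst hg'
        exact Finset.mem_filter.mpr ⟨h2, hv2⟩
    have hcard : (M₁.filter (fun e' => v ∈ e')).card ≤ ({g₁, g₂} : Finset (Sym2 V)).card := by
      have h2 : degIn M₁ v ≤ 2 := hM₁.2 v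
      rw [degIn_eq] at h2
      rw [Finset.card_insert_of_notMem (by simp [hne]), Finset.card_singleton]
      omega
    have heq := Finset.eq_of_subset_of_card_le hsubset hcard
    have hfin : g ∈ ({g₁, g₂} : Finset (Sym2 V)) := heq ▸ Finset.mem_filter.mpr ⟨hg, hvg⟩
    simpa using hfin
  have hSa1 : ∀ g ∈ M₁, a ∈ g → g = s(a,c) ∨ g = s(a,d) :=
    sat a s(a,c) s(a,d) hne1 h1ac h1ad (by simp) (by simp)
  have hSc1 : ∀ g ∈ M₁, c ∈ g → g = s(a,c) ∨ g = s(c,d) :=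
    sat c s(a,c) s(c,d) hne2 h1ac h1cd (by simp) (by simp)
  have hSd1 : ∀ g ∈ M₁, d ∈ g → g = s(a,d) ∨ g = s(c,d) :=
    sat d s(a,d) s(c,d) hne3 h1ad h1cd (by simp) (by simp)
  have hdeM1 : s(d,e) ∉ M₁ := by
    intro h
    rcases hSd1 _ h (by simp) with h' | h' <;>
      rcases Sym2.eq_iff.mp h' with ⟨h1', h2'⟩ | ⟨h1', h2'⟩ <;> simp_all
  have hcfM1 : s(c,f) ∉ M₁ := by
    intro h
    rcases hSc1 _ h (by simp) with h' | h' <;>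
      rcases Sym2.eq_iff.mp h' with ⟨h1', h2'⟩ | ⟨h1', h2'⟩ <;> simp_all
  set M₂ : Finset (Sym2 V) :=
    (M₁ \ {s(c,d), s(e,f)}) ∪ {s(d,e), s(c,f)} with hM₂def
  have hmem₂ : ∀ g, g ∈ M₂ ↔ (g ∈ M₁ ∧ g ≠ s(c,d) ∧ g ≠ s(e,f)) ∨ g = s(d,e) ∨ g = s(c,f) := by
    intro g
    rw [hM₂def, Finset.mem_union, Finset.mem_sdiff, Finset.mem_insert, Finset.mem_singleton,
      Finset.mem_insert, Finset.mem_singleton]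
    tauto
  clear_value M₂
  -- saturation in M₂
  have hSa2 : ∀ g ∈ M₂, a ∈ g → g = s(a,c) ∨ g = s(a,d) := by
    intro g hg hag
    rcases (hmem₂ g).1 hg with ⟨h1, -, -⟩ | rfl | rfl
    · exact hSa1 g h1 hag
    · exfalso; rw [Sym2.mem_iff] at hag; rcases hag with h | h
      exacts [had h, hae h]
    · exfalso; rw [Sym2.mem_iff] at hag; rcases hag with h | h
      exacts [hac h, haf h]
  have hSc2 : ∀ g ∈ M₂, c ∈ g → g = s(a,c) ∨ g = s(c,f) := by
    intro g hg hcg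
    rcases (hmem₂ g).1 hg with ⟨h1, h2, -⟩ | rfl | rfl
    · rcases hSc1 g h1 hcg with h' | h'
      · exact Or.inl h'
      · exact absurd h' h2
    · exfalso; rw [Sym2.mem_iff] at hcg; rcases hcg with h | h
      exacts [hcd h, hce h]
    · exact Or.inr rfl
  have hSd2 : ∀ g ∈ M₂, d ∈ g → g = s(a,d) ∨ g = s(d,e) := by
    intro g hg hdg
    rcases (hmem₂ g).1 hg with ⟨h1, h2, -⟩ | rfl | rfl
    · rcases hSd1 g h1 hdg with h' | h'
      · exact Or.inl h'
      · exact absurd h' h2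
    · exact Or.inr rfl
    · exfalso; rw [Sym2.mem_iff] at hdg; rcases hdg with h | h
      exacts [hcd h.symm, hdf h]
  refine ⟨M₂, ⟨?_, ?_⟩, ?_, ?_, ?_, ?_⟩
  · -- edges of M₂ are edges of G
    intro g hg
    rcases (hmem₂ g).1 hg with ⟨h1, -, -⟩ | rfl | rfl
    · exact hM₁.1 g h1
    · exact (SimpleGraph.mem_edgeSet G).mpr hAde
    · exact (SimpleGraph.mem_edgeSet G).mpr hAfc.symm
  · -- degree bound
    intro v
    rw [degIn_eq]
    by_cases hvc : v = c
    · subst hvc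
      have hfil : M₂.filter (fun g => v ∈ g) ⊆ {s(a,v), s(v,f)} := by
        intro g hg
        rw [Finset.mem_filter] at hg
        rcases hSc2 g hg.1 hg.2 with rfl | rfl <;> simp
      refine le_trans (Finset.card_le_card hfil) ?_
      refine le_trans (Finset.card_insert_le _ _) ?_
      simp
    by_cases hvd : v = d
    · subst hvd
      have hfil : M₂.filter (fun g => v ∈ g) ⊆ {s(a,v), s(v,e)} := by
        intro g hg
        rw [Finset.mem_filter] at hg
        rcases hSd2 g hg.1 hg.2 with rfl | rfl <;> simp
      refine le_trans (Finset.card_le_card hfil) ?_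
      refine le_trans (Finset.card_insert_le _ _) ?_
      simp
    by_cases hve : v = e
    · subst hve
      have hfil : M₂.filter (fun g => v ∈ g) ⊆
          insert s(d,v) ((G.incidenceFinset v) \ {s(d,v), s(v,f)}) := by
        intro g hg
        rw [Finset.mem_filter] at hg
        obtain ⟨hg, hvg⟩ := hg
        rcases (hmem₂ g).1 hg with ⟨h1, h2, h3⟩ | rfl | rfl
        · refine Finset.mem_insert.mpr (Or.inr (Finset.mem_sdiff.mpr ⟨?_, ?_⟩))
          · rw [SimpleGraph.mem_incidenceFinset]
            exact ⟨hM₁.1 g h1, hvg⟩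
          · simp only [Finset.mem_insert, Finset.mem_singleton, not_or]
            exact ⟨fun hh => hdeM1 (hh ▸ h1), h3⟩
        · exact Finset.mem_insert_self _ _
        · exfalso; rw [Sym2.mem_iff] at hvg; rcases hvg with h | h
          exacts [hce h.symm, hef h]
      have hinc : ({s(d,v), s(v,f)} : Finset (Sym2 V)) ⊆ G.incidenceFinset v := by
        intro g hg
        simp only [Finset.mem_insert, Finset.mem_singleton] at hg
        rcases hg with rfl | rfl <;> rw [SimpleGraph.mem_incidenceFinset]
        · exact ⟨(SimpleGraph.mem_edgeSet G).mpr hAde, by simp⟩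
        · exact ⟨(SimpleGraph.mem_edgeSet G).mpr hAef, by simp⟩
      have hcard2 : ({s(d,v), s(v,f)} : Finset (Sym2 V)).card = 2 := by
        rw [Finset.card_insert_of_notMem (by simp [hne6]), Finset.card_singleton]
      have hdeg := hsub v
      calc (M₂.filter (fun g => v ∈ g)).card
          ≤ (insert s(d,v) ((G.incidenceFinset v) \ {s(d,v), s(v,f)})).card :=
            Finset.card_le_card hfil
        _ ≤ ((G.incidenceFinset v) \ {s(d,v), s(v,f)}).card + 1 := Finset.card_insert_le _ _
        _ = G.degree v - 2 + 1 := by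
            rw [Finset.card_sdiff_of_subset hinc, hcard2, SimpleGraph.card_incidenceFinset_eq_degree]
        _ ≤ 2 := by omega
    by_cases hvf : v = f
    · subst hvf
      have hfil : M₂.filter (fun g => v ∈ g) ⊆
          insert s(c,v) ((G.incidenceFinset v) \ {s(c,v), s(e,v)}) := by
        intro g hg
        rw [Finset.mem_filter] at hg
        obtain ⟨hg, hvg⟩ := hg
        rcases (hmem₂ g).1 hg with ⟨h1, h2, h3⟩ | rfl | rfl
        · refine Finset.mem_insert.mpr (Or.inr (Finset.mem_sdiff.mpr ⟨?_, ?_⟩))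
          · rw [SimpleGraph.mem_incidenceFinset]
            exact ⟨hM₁.1 g h1, hvg⟩
          · simp only [Finset.mem_insert, Finset.mem_singleton, not_or]
            exact ⟨fun hh => hcfM1 (hh ▸ h1), h3⟩
        · exfalso; rw [Sym2.mem_iff] at hvg; rcases hvg with h | h
          exacts [hdf h.symm, hef h.symm]
        · exact Finset.mem_insert_self _ _
      have hinc : ({s(c,v), s(e,v)} : Finset (Sym2 V)) ⊆ G.incidenceFinset v := by
        intro g hg
        simp only [Finset.mem_insert, Finset.mem_singleton] at hg
        rcases hg with rfl | rfl <;> rw [SimpleGraph.mem_incidenceFinset]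
        · exact ⟨(SimpleGraph.mem_edgeSet G).mpr hAfc.symm, by simp⟩
        · exact ⟨(SimpleGraph.mem_edgeSet G).mpr hAef, by simp⟩
      have hcard2 : ({s(c,v), s(e,v)} : Finset (Sym2 V)).card = 2 := by
        rw [Finset.card_insert_of_notMem ?_, Finset.card_singleton]
        simp only [Finset.mem_singleton]
        intro h; rcases Sym2.eq_iff.mp h with ⟨h1', h2'⟩ | ⟨h1', h2'⟩
        exacts [hce h1', hcf h1']
      have hdeg := hsub v
      calc (M₂.filter (fun g => v ∈ g)).card
          ≤ (insert s(c,v) ((G.incidenceFinset v) \ {s(c,v), s(e,v)})).card :=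
            Finset.card_le_card hfil
        _ ≤ ((G.incidenceFinset v) \ {s(c,v), s(e,v)}).card + 1 := Finset.card_insert_le _ _
        _ = G.degree v - 2 + 1 := by
            rw [Finset.card_sdiff_of_subset hinc, hcard2, SimpleGraph.card_incidenceFinset_eq_degree]
        _ ≤ 2 := by omega
    · -- generic vertex
      have hfil : M₂.filter (fun g => v ∈ g) ⊆ M₁.filter (fun g => v ∈ g) := by
        intro g hg
        rw [Finset.mem_filter] at hg ⊢
        obtain ⟨hg, hvg⟩ := hg
        rcases (hmem₂ g).1 hg with ⟨h1, -, -⟩ | rfl | rfl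
        · exact ⟨h1, hvg⟩
        · exfalso; rw [Sym2.mem_iff] at hvg; tauto
        · exfalso; rw [Sym2.mem_iff] at hvg; tauto
      refine le_trans (Finset.card_le_card hfil) ?_
      rw [← degIn_eq]
      exact hM₁.2 v
  · -- weight does not decrease
    obtain ⟨r, hr⟩ := hvi
    have hwde : w s(d,e) = r d + r e := hr d e (by tauto) (by tauto) hAde
    have hwcf : w s(c,f) = r c + r f := hr c f (by tauto) (by tauto) hAfc.symm
    have hwcd : w s(c,d) = r c + r d := hr c d (by tauto) (by tauto) hAcd
    have hwef : w s(e,f) = r e + r f := hr e f (by tauto) (by tauto) hAef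
    have hdisj : Disjoint (M₁ \ {s(c,d), s(e,f)}) ({s(d,e), s(c,f)} : Finset (Sym2 V)) := by
      rw [Finset.disjoint_right]
      intro g hg
      simp only [Finset.mem_insert, Finset.mem_singleton] at hg
      rcases hg with rfl | rfl <;> intro hmem <;>
        [exact hdeM1 (Finset.mem_sdiff.mp hmem).1; exact hcfM1 (Finset.mem_sdiff.mp hmem).1]
    have hsum2 : ∑ e' ∈ M₂, w e' = ∑ e' ∈ M₁ \ {s(c,d), s(e,f)}, w e' + (w s(d,e) + w s(c,f)) := by
      rw [hM₂def, Finset.sum_union hdisj, Finset.sum_pair hne5]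
    have hsum1 : ∑ e' ∈ M₁ ∩ {s(c,d), s(e,f)}, w e' + ∑ e' ∈ M₁ \ {s(c,d), s(e,f)}, w e'
        = ∑ e' ∈ M₁, w e' := Finset.sum_inter_add_sum_sdiff _ _ _
    have hinterS : ∑ e' ∈ M₁ ∩ {s(c,d), s(e,f)}, w e' ≤ w s(c,d) + w s(e,f) := by
      rw [← Finset.sum_pair hne4]
      exact Finset.sum_le_sum_of_subset_of_nonneg Finset.inter_subset_right
        (fun i _ _ => hw i)
    linarith
  · -- the triangle is destroyed
    intro hcon
    have hmem := (hmem₂ _).1 (hcon hmcd)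
    rcases hmem with ⟨-, h', -⟩ | h' | h'
    · exact h' rfl
    · rcases Sym2.eq_iff.mp h' with ⟨h1', h2'⟩ | ⟨h1', h2'⟩
      exacts [hcd h1', hce h1']
    · rcases Sym2.eq_iff.mp h' with ⟨h1', h2'⟩ | ⟨h1', h2'⟩
      exacts [hdf h2', hcf h1']
  · -- no new triangle
    intro t' ht' hsubM₂ g hgt'
    by_contra hgM₁
    rcases (hmem₂ g).1 (hsubM₂ hgt') with ⟨h1, -, -⟩ | rfl | rfl
    · exact hgM₁ h1
    · obtain ⟨hd1, he1, hde1⟩ := mem_triEdges.mp hgt'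
      obtain ⟨x, hxt, hxd, hxe⟩ := tri_third ht'.1 hd1 he1 hde1
      have h1 : s(d,x) ∈ triEdges t' := mem_triEdges.mpr ⟨hd1, hxt, Ne.symm hxd⟩
      have hxa : x = a := by
        rcases hSd2 _ (hsubM₂ h1) (by simp) with h' | h' <;>
          rcases Sym2.eq_iff.mp h' with ⟨h1', h2'⟩ | ⟨h1', h2'⟩
        exacts [absurd h1'.symm had, h2', absurd h2' hxe, absurd h1' hde]
      subst hxa
      have h3 : s(x,e) ∈ triEdges t' := mem_triEdges.mpr ⟨hxt, he1, hae⟩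
      rcases hSa2 _ (hsubM₂ h3) (by simp) with h' | h' <;>
        rcases Sym2.eq_iff.mp h' with ⟨h1', h2'⟩ | ⟨h1', h2'⟩
      exacts [hce h2'.symm, hac h1', hde h2'.symm, had h1']
    · obtain ⟨hc1, hf1, hcf1⟩ := mem_triEdges.mp hgt'
      obtain ⟨x, hxt, hxc, hxf⟩ := tri_third ht'.1 hc1 hf1 hcf1
      have h1 : s(c,x) ∈ triEdges t' := mem_triEdges.mpr ⟨hc1, hxt, Ne.symm hxc⟩
      have hxa : x = a := by
        rcases hSc2 _ (hsubM₂ h1) (by simp) with h' | h' <;>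
          rcases Sym2.eq_iff.mp h' with ⟨h1', h2'⟩ | ⟨h1', h2'⟩
        exacts [absurd h1'.symm hac, h2', absurd h2' hxf, absurd h1' hcf]
      subst hxa
      have h3 : s(x,f) ∈ triEdges t' := mem_triEdges.mpr ⟨hxt, hf1, haf⟩
      rcases hSa2 _ (hsubM₂ h3) (by simp) with h' | h' <;>
        rcases Sym2.eq_iff.mp h' with ⟨h1', h2'⟩ | ⟨h1', h2'⟩
      exacts [hcf h2'.symm, hac h1', hdf h2'.symm, had h1']
  · -- no new square
    intro x y z u hsq hsubM₂ g hgsq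
    by_contra hgM₁
    rcases (hmem₂ g).1 (hsubM₂ hgsq) with ⟨h1, -, -⟩ | rfl | rfl
    · exact hgM₁ h1
    · obtain ⟨p', q', hpq1, hpq2, h1, h2, h3⟩ := sq_edge_path hsq hgsq
      have hpa : p' = a := by
        rcases hSd2 _ (hsubM₂ h1) (by simp) with h' | h' <;>
          rcases Sym2.eq_iff.mp h' with ⟨h1', h2'⟩ | ⟨h1', h2'⟩
        exacts [absurd h1'.symm had, h2', absurd h2' hpq1, absurd h1' hde]
      subst hpa
      have hqc : q' = c := by
        rcases hSa2 _ (hsubM₂ h2) (by simp) with h' | h' <;>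
          rcases Sym2.eq_iff.mp h' with ⟨h1', h2'⟩ | ⟨h1', h2'⟩
        exacts [h2', absurd h1' hac, absurd h2' hpq2, absurd h1' had]
      subst hqc
      rcases hSc2 _ (hsubM₂ h3) (by simp) with h' | h' <;>
        rcases Sym2.eq_iff.mp h' with ⟨h1', h2'⟩ | ⟨h1', h2'⟩
      exacts [hac h1'.symm, hae h2'.symm, hef h2', hcf h1']
    · obtain ⟨p', q', hpq1, hpq2, h1, h2, h3⟩ := sq_edge_path hsq hgsq
      have hpa : p' = a := by
        rcases hSc2 _ (hsubM₂ h1) (by simp) with h' | h' <;>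
          rcases Sym2.eq_iff.mp h' with ⟨h1', h2'⟩ | ⟨h1', h2'⟩
        exacts [absurd h1'.symm hac, h2', absurd h2' hpq1, absurd h1' hcf]
      subst hpa
      have hqd : q' = d := by
        rcases hSa2 _ (hsubM₂ h2) (by simp) with h' | h' <;>
          rcases Sym2.eq_iff.mp h' with ⟨h1', h2'⟩ | ⟨h1', h2'⟩
        exacts [absurd h2' hpq2, absurd h1' hac, h2', absurd h1' had]
      subst hqd
      rcases hSd2 _ (hsubM₂ h3) (by simp) with h' | h' <;>
        rcases Sym2.eq_iff.mp h' with ⟨h1', h2'⟩ | ⟨h1', h2'⟩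
      exacts [had h1'.symm, haf h2'.symm, hef h2'.symm, hde h1']

end Paper
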